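/- Let ε∈(0,1], ζ=(1+ε)/2, and let f,g∈L¹₃(ℝ³) be nonnegative. Set h=f−g and ψ(v)=sgn(h(v))⟨v⟩² (with sgn(0)=0). Then (1/2)∫_{ℝ³}∫_{ℝ³}( f(v)f(w) − g(v)g(w) ) |v−w| A_ζ[ψ](v,w) dv dw ≤ ‖f+g‖_{L¹₃} ‖f−g‖_{L¹₂}. -/

import Mathlib

open MeasureTheory Real Metric Filter Set
open scoped RealInnerProductSpace Topology ENNReal
noncomputable section

/-- The velocity space ℝ³. -/
abbrev V : Type := EuclideanSpace ℝ (Fin 3)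

/-- Surface measure on the unit sphere S² ⊂ ℝ³ (total mass 4π). -/
def S2 : Measure (sphere (0:V) 1) := (volume : Measure V).toSphere

/-- The weight ⟨v⟩ = √(1+|v|²). -/
def jap (v : V) : ℝ := Real.sqrt (1 + ‖v‖^2)

/-- The weighted L¹ norm ‖f‖_{L¹_η} = ∫ |f(v)| ⟨v⟩^η dv. -/
def L1norm (f : V → ℝ) (η : ℝ) : ℝ := ∫ v : V, |f v| * (jap v)^η

/-- The weighted Lᵖ norm ‖f‖_{L^p_η} = (∫ |f(v)|^p ⟨v⟩^{pη} dv)^{1/p}. -/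
def Lpnorm (f : V → ℝ) (p η : ℝ) : ℝ := (∫ v : V, |f v|^p * (jap v)^(p*η)) ^ (1/p)

/-- Membership f ∈ L¹_η(ℝ³). -/
def MemL1w (f : V → ℝ) (η : ℝ) : Prop :=
  Integrable (fun v : V => |f v| * (jap v)^η)

/-- Membership f ∈ L^p_η(ℝ³). -/
def MemLpw (f : V → ℝ) (p η : ℝ) : Prop :=
  Integrable (fun v : V => |f v|^p * (jap v)^(p*η))

/-- A_ζ[ψ](v,w) = (1/4π) ∫_{S²} (ψ(v')+ψ(w')−ψ(v)−ψ(w)) dσ, with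
v' = v + (ζ/2)(|q|σ−q), w' = w − (ζ/2)(|q|σ−q), q = v−w. -/
def Aop (ζ : ℝ) (ψ : V → ℝ) (v w : V) : ℝ :=
  (4*π)⁻¹ * ∫ (σ : sphere (0:V) 1),
    (ψ (v + (ζ/2) • (‖v - w‖ • (σ:V) - (v - w)))
      + ψ (w - (ζ/2) • (‖v - w‖ • (σ:V) - (v - w))) - ψ v - ψ w) ∂S2

/-- J_e[ψ](v,w) = (1/4π) ∫_{S²} (ψ(ṽ*)−ψ(v)) dσ where ṽ* = v − κ(q−|q|σ), q = v−w. -/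
def Jop (κ : ℝ) (ψ : V → ℝ) (v w : V) : ℝ :=
  (4*π)⁻¹ * ∫ (σ : sphere (0:V) 1),
    (ψ (v - κ • ((v - w) - ‖v - w‖ • (σ:V))) - ψ v) ∂S2

/-- The gain part 𝒬⁺(f,f) of the inelastic Boltzmann operator with restitution
coefficient ε; with ζ = (1+ε)/2 and q = v−w,
'v = v + (ζ/2ε)(|q|σ−q) and 'w = w − (ζ/2ε)(|q|σ−q). -/
def Qplus (ε : ℝ) (f : V → ℝ) (v : V) : ℝ :=
  (4*π*ε^2)⁻¹ * ∫ w : V, (∫ (σ : sphere (0:V) 1),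
      ‖v - w‖ * f (v + ((1+ε)/(4*ε)) • (‖v - w‖ • (σ:V) - (v - w)))
        * f (w - ((1+ε)/(4*ε)) • (‖v - w‖ • (σ:V) - (v - w))) ∂S2)

/-- The loss part 𝒬⁻(f,f)(v) = f(v) ∫ |v−w| f(w) dw. -/
def Qminus (f : V → ℝ) (v : V) : ℝ := f v * ∫ w : V, ‖v - w‖ * f w

/-- The gain part ℒ⁺ of the linear scattering operator with host distribution F1,
mean free path lam, mass ratio α = m₁/(1+m₁) and inelasticity β = (1−e)/2;
with q = v−w, γ = α(1−β)/(1−2β) = α(1+e)/(2e), γ̄ = (1−α)(1−β)/(1−2β) = (1−α)(1+e)/(2e),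
ṽ⋆ = v − γ(q−|q|σ), w̃⋆ = w + γ̄(q−|q|σ). -/
def Lplus (m₁ lam e : ℝ) (F1 f : V → ℝ) (v : V) : ℝ :=
  (4*π*lam*e^2)⁻¹ * ∫ w : V, (∫ (σ : sphere (0:V) 1),
      ‖v - w‖ * f (v - ((m₁/(1+m₁)) * (1+e)/(2*e)) • ((v - w) - ‖v - w‖ • (σ:V)))
        * F1 (w + ((1/(1+m₁)) * (1+e)/(2*e)) • ((v - w) - ‖v - w‖ • (σ:V))) ∂S2)

/-- The collision frequency ν(v) = (1/λ) ∫ |v−w| F₁(w) dw. -/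
def nufreq (lam : ℝ) (F1 : V → ℝ) (v : V) : ℝ := lam⁻¹ * ∫ w : V, ‖v - w‖ * F1 w


-- Auxiliary lemmas

lemma measurable_sign : Measurable Real.sign := by
  unfold Real.sign
  exact (measurable_const.ite (measurableSet_lt measurable_id measurable_const)
    (measurable_const.ite (measurableSet_lt measurable_const measurable_id) measurable_const))

lemma jap_one_le (v : V) : 1 ≤ jap v := by
  exact Real.le_sqrt_of_sq_le (by nlinarith [sq_nonneg ‖v‖])

lemma jap_sq (v : V) : jap v ^ 2 = 1 + ‖v‖^2 := Real.sq_sqrt (by positivity)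

lemma jap_nonneg (v : V) : 0 ≤ jap v := Real.sqrt_nonneg _

lemma norm_sub_le_jap (v w : V) : ‖v - w‖ ≤ jap v * jap w := by
  have h1 := norm_sub_le v w
  have h2 : (‖v‖ + ‖w‖)^2 ≤ (jap v * jap w)^2 := by
    rw [mul_pow, jap_sq, jap_sq]; nlinarith [sq_nonneg (‖v‖*‖w‖ - 1)]
  have h3 : ‖v‖ + ‖w‖ ≤ jap v * jap w := by
    have h4 := Real.sqrt_le_sqrt h2
    rwa [Real.sqrt_sq (by positivity),
      Real.sqrt_sq (mul_nonneg (jap_nonneg v) (jap_nonneg w))] at h4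
  linarith

instance : IsFiniteMeasure S2 := by unfold S2; infer_instance

lemma S2_univ : (S2 Set.univ).toReal = 4 * π := by
  rw [S2, Measure.toSphere_apply_univ, EuclideanSpace.volume_ball]
  have h32 : Real.Gamma ((3:ℕ) / 2 + 1) = 3/4 * Real.sqrt π := by
    push_cast
    rw [show (3:ℝ)/2 + 1 = (3/2) + 1 by norm_num, Real.Gamma_add_one (by norm_num),
      show (3:ℝ)/2 = 1/2 + 1 by norm_num, Real.Gamma_add_one (by norm_num),
      Real.Gamma_one_half_eq]
    ring
  have hπ : Real.sqrt π ^ 3 / (3/4 * Real.sqrt π) = 4/3 * π := by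
    have h : Real.sqrt π > 0 := Real.sqrt_pos.2 pi_pos
    field_simp
    nlinarith [Real.sq_sqrt pi_pos.le]
  simp only [Fintype.card_fin, h32, finrank_euclideanSpace, hπ]
  rw [ENNReal.toReal_mul, ENNReal.toReal_mul, ENNReal.toReal_pow,
    ENNReal.toReal_ofReal (by norm_num : (0:ℝ) ≤ 1),
    ENNReal.toReal_ofReal (by positivity)]
  simp
  ring

lemma energy_ineq (ζ : ℝ) (h0 : 0 ≤ ζ) (h1 : ζ ≤ 1) (v w σ : V) (hσ : ‖σ‖ = 1) :
    ‖v + (ζ/2) • (‖v - w‖ • σ - (v - w))‖^2 + ‖w - (ζ/2) • (‖v - w‖ • σ - (v - w))‖^2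
      ≤ ‖v‖^2 + ‖w‖^2 := by
  set q : V := v - w with hq
  set a : V := (ζ/2) • (‖q‖ • σ - q) with ha
  have e1 : ‖v + a‖^2 = ‖v‖^2 + 2 * ⟪v, a⟫ + ‖a‖^2 := by
    rw [@norm_add_sq_real]
  have e2 : ‖w - a‖^2 = ‖w‖^2 - 2 * ⟪w, a⟫ + ‖a‖^2 := by
    rw [@norm_sub_sq_real]
  have e3 : ⟪v, a⟫ - ⟪w, a⟫ = ⟪q, a⟫ := by rw [hq, inner_sub_left]
  have e4 : ⟪q, a⟫ = (ζ/2) * (‖q‖ * ⟪q, σ⟫ - ‖q‖^2) := by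
    rw [ha, real_inner_smul_right, inner_sub_right, real_inner_smul_right,
      real_inner_self_eq_norm_sq]
  have e5 : ‖a‖^2 = (ζ/2)^2 * (2*‖q‖^2 - 2*(‖q‖ * ⟪q, σ⟫)) := by
    rw [ha, norm_smul, mul_pow, @norm_sub_sq_real, norm_smul, real_inner_smul_left]
    simp only [hσ, Real.norm_eq_abs, abs_norm, mul_one, real_inner_comm σ q,
      sq_abs]
    ring
  have cs : ⟪q, σ⟫ ≤ ‖q‖ := by
    have := real_inner_le_norm q σ
    rwa [hσ, mul_one] at this
  have hqn : 0 ≤ ‖q‖ := norm_nonneg q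
  have key : ⟪q, a⟫ + ‖a‖^2 ≤ 0 := by
    rw [e4, e5]
    have hmul : ‖q‖ * ⟪q, σ⟫ ≤ ‖q‖^2 := by nlinarith
    nlinarith [mul_nonneg (mul_nonneg h0 (sub_nonneg.2 h1)) (sub_nonneg.2 hmul)]
  nlinarith [e1, e2, e3]

lemma continuous_jap : Continuous jap := by
  unfold jap; fun_prop

lemma abs_sign_le (x : ℝ) : |Real.sign x| ≤ 1 := by
  rcases Real.sign_apply_eq x with h | h | h <;> rw [h] <;> norm_num

lemma real_self_mul_sign (x : ℝ) : x * Real.sign x = |x| := by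
  rcases lt_trichotomy x 0 with h | h | h
  · rw [Real.sign_of_neg h, abs_of_neg h]; ring
  · simp [h]
  · rw [Real.sign_of_pos h, abs_of_pos h]; ring

section key
variable (f g : V → ℝ)

/-- abbreviation for the test function -/
def psi (f g : V → ℝ) : V → ℝ := fun u => Real.sign (f u - g u) * (jap u)^2

lemma psi_abs_le (u : V) : |psi f g u| ≤ jap u ^ 2 := by
  rw [psi, abs_mul, abs_of_nonneg (by positivity : (0:ℝ) ≤ jap u ^ 2)]
  exact mul_le_of_le_one_left (by positivity) (abs_sign_le _)

lemma measurable_psi (hfm : Measurable f) (hgm : Measurable g) : Measurable (psi f g) :=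
  (measurable_sign.comp (hfm.sub hgm)).mul ((continuous_jap.pow 2).measurable)

lemma sphere_integrand_integrable (hfm : Measurable f) (hgm : Measurable g)
    (ζ : ℝ) (h0 : 0 ≤ ζ) (h1 : ζ ≤ 1) (v w : V) :
    Integrable (fun σ : sphere (0:V) 1 =>
      (psi f g (v + (ζ/2) • (‖v - w‖ • (σ:V) - (v - w)))
        + psi f g (w - (ζ/2) • (‖v - w‖ • (σ:V) - (v - w)))
        - psi f g v - psi f g w)) S2 := by
  have hψ := measurable_psi f g hfm hgm
  have hc1 : Continuous (fun σ : sphere (0:V) 1 => v + (ζ/2) • (‖v - w‖ • (σ:V) - (v - w))) := by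
    fun_prop
  have hc2 : Continuous (fun σ : sphere (0:V) 1 => w - (ζ/2) • (‖v - w‖ • (σ:V) - (v - w))) := by
    fun_prop
  have hm : Measurable (fun σ : sphere (0:V) 1 =>
      (psi f g (v + (ζ/2) • (‖v - w‖ • (σ:V) - (v - w)))
        + psi f g (w - (ζ/2) • (‖v - w‖ • (σ:V) - (v - w)))
        - psi f g v - psi f g w)) :=
    (((hψ.comp hc1.measurable).add (hψ.comp hc2.measurable)).sub measurable_const).sub
      measurable_const
  refine Integrable.mono' (integrable_const (2 * (jap v ^ 2 + jap w ^ 2)))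
    hm.aestronglyMeasurable (Filter.Eventually.of_forall fun σ => ?_)
  have hσ : ‖(σ:V)‖ = 1 := by
    have := σ.2; rwa [mem_sphere_zero_iff_norm] at this
  have hE := energy_ineq ζ h0 h1 v w (σ:V) hσ
  have b1 := psi_abs_le f g (v + (ζ/2) • (‖v - w‖ • (σ:V) - (v - w)))
  have b2 := psi_abs_le f g (w - (ζ/2) • (‖v - w‖ • (σ:V) - (v - w)))
  have b3 := psi_abs_le f g v
  have b4 := psi_abs_le f g w
  have e1 := jap_sq (v + (ζ/2) • (‖v - w‖ • (σ:V) - (v - w)))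
  have e2 := jap_sq (w - (ζ/2) • (‖v - w‖ • (σ:V) - (v - w)))
  have e3 := jap_sq v
  have e4 := jap_sq w
  rw [Real.norm_eq_abs]
  set a := psi f g (v + (ζ/2) • (‖v - w‖ • (σ:V) - (v - w))) with hadef
  set b := psi f g (w - (ζ/2) • (‖v - w‖ • (σ:V) - (v - w))) with hbdef
  have t1 : |a + b - psi f g v - psi f g w| ≤ |a| + |b| + |psi f g v| + |psi f g w| := by
    calc |a + b - psi f g v - psi f g w| ≤ |a + b - psi f g v| + |psi f g w| := abs_sub _ _
      _ ≤ (|a + b| + |psi f g v|) + |psi f g w| := by linarith [abs_sub (a + b) (psi f g v)]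
      _ ≤ _ := by linarith [abs_add_le a b]
  have hn1 : 0 ≤ ‖v + (ζ/2) • (‖v - w‖ • (σ:V) - (v - w))‖^2 := sq_nonneg _
  have hn2 : 0 ≤ ‖w - (ζ/2) • (‖v - w‖ • (σ:V) - (v - w))‖^2 := sq_nonneg _
  linarith

end key

section key2
variable (f g : V → ℝ)

lemma sAop_left (hfm : Measurable f) (hgm : Measurable g)
    (ζ : ℝ) (h0 : 0 ≤ ζ) (h1 : ζ ≤ 1) (v w : V) :
    (f v - g v) * Aop ζ (psi f g) v w ≤ |f v - g v| * (2 * jap w ^ 2) := by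
  set s := f v - g v with hs
  set φ := fun σ : sphere (0:V) 1 =>
      (psi f g (v + (ζ/2) • (‖v - w‖ • (σ:V) - (v - w)))
        + psi f g (w - (ζ/2) • (‖v - w‖ • (σ:V) - (v - w)))
        - psi f g v - psi f g w) with hφ
  have hI : Integrable φ S2 := sphere_integrand_integrable f g hfm hgm ζ h0 h1 v w
  have hpt : ∀ σ : sphere (0:V) 1, s * φ σ ≤ |s| * (2 * jap w ^ 2) := by
    intro σ
    have hσ : ‖(σ:V)‖ = 1 := by
      have := σ.2; rwa [mem_sphere_zero_iff_norm] at this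
    have hE := energy_ineq ζ h0 h1 v w (σ:V) hσ
    set v' := v + (ζ/2) • (‖v - w‖ • (σ:V) - (v - w)) with hv'
    set w' := w - (ζ/2) • (‖v - w‖ • (σ:V) - (v - w)) with hw'
    have hE' : jap v' ^ 2 + jap w' ^ 2 ≤ jap v ^ 2 + jap w ^ 2 := by
      rw [jap_sq, jap_sq, jap_sq, jap_sq]; linarith
    have c1 : s * psi f g v' ≤ |s| * jap v' ^ 2 := by
      calc s * psi f g v' ≤ |s * psi f g v'| := le_abs_self _
        _ = |s| * |psi f g v'| := abs_mul _ _
        _ ≤ |s| * jap v' ^ 2 := mul_le_mul_of_nonneg_left (psi_abs_le f g v') (abs_nonneg s)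
    have c2 : s * psi f g w' ≤ |s| * jap w' ^ 2 := by
      calc s * psi f g w' ≤ |s * psi f g w'| := le_abs_self _
        _ = |s| * |psi f g w'| := abs_mul _ _
        _ ≤ |s| * jap w' ^ 2 := mul_le_mul_of_nonneg_left (psi_abs_le f g w') (abs_nonneg s)
    have c3 : s * psi f g v = |s| * jap v ^ 2 := by
      rw [psi, ← hs, ← mul_assoc, real_self_mul_sign]
    have c4 : -(s * psi f g w) ≤ |s| * jap w ^ 2 := by
      calc -(s * psi f g w) ≤ |s * psi f g w| := neg_le_abs _
        _ = |s| * |psi f g w| := abs_mul _ _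
        _ ≤ |s| * jap w ^ 2 := mul_le_mul_of_nonneg_left (psi_abs_le f g w) (abs_nonneg s)
    have c5 : |s| * (jap v' ^ 2 + jap w' ^ 2) ≤ |s| * (jap v ^ 2 + jap w ^ 2) :=
      mul_le_mul_of_nonneg_left hE' (abs_nonneg s)
    have expand : s * φ σ = s * psi f g v' + s * psi f g w' - s * psi f g v - s * psi f g w := by
      rw [hφ]; ring
    rw [expand, c3]
    nlinarith [c1, c2, c4, c5]
  have step : s * ∫ σ, φ σ ∂S2 ≤ 4 * π * (|s| * (2 * jap w ^ 2)) := by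
    rw [← MeasureTheory.integral_const_mul]
    calc ∫ σ, s * φ σ ∂S2 ≤ ∫ _σ, |s| * (2 * jap w ^ 2) ∂S2 :=
          integral_mono (hI.const_mul s) (integrable_const _) hpt
      _ = (S2 Set.univ).toReal * (|s| * (2 * jap w ^ 2)) := by
          rw [integral_const]; simp [smul_eq_mul, Measure.real]
      _ = 4 * π * (|s| * (2 * jap w ^ 2)) := by rw [S2_univ]
  have hπ : (0:ℝ) < 4 * π := by positivity
  calc s * Aop ζ (psi f g) v w = (4*π)⁻¹ * (s * ∫ σ, φ σ ∂S2) := by rw [Aop]; ring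
    _ ≤ (4*π)⁻¹ * (4 * π * (|s| * (2 * jap w ^ 2))) :=
        mul_le_mul_of_nonneg_left step (by positivity)
    _ = |s| * (2 * jap w ^ 2) := by field_simp
end key2

section key3
variable (f g : V → ℝ)

lemma sAop_right (hfm : Measurable f) (hgm : Measurable g)
    (ζ : ℝ) (h0 : 0 ≤ ζ) (h1 : ζ ≤ 1) (v w : V) :
    (f w - g w) * Aop ζ (psi f g) v w ≤ |f w - g w| * (2 * jap v ^ 2) := by
  set s := f w - g w with hs
  set φ := fun σ : sphere (0:V) 1 =>
      (psi f g (v + (ζ/2) • (‖v - w‖ • (σ:V) - (v - w)))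
        + psi f g (w - (ζ/2) • (‖v - w‖ • (σ:V) - (v - w)))
        - psi f g v - psi f g w) with hφ
  have hI : Integrable φ S2 := sphere_integrand_integrable f g hfm hgm ζ h0 h1 v w
  have hpt : ∀ σ : sphere (0:V) 1, s * φ σ ≤ |s| * (2 * jap v ^ 2) := by
    intro σ
    have hσ : ‖(σ:V)‖ = 1 := by
      have := σ.2; rwa [mem_sphere_zero_iff_norm] at this
    have hE := energy_ineq ζ h0 h1 v w (σ:V) hσ
    set v' := v + (ζ/2) • (‖v - w‖ • (σ:V) - (v - w)) with hv'
    set w' := w - (ζ/2) • (‖v - w‖ • (σ:V) - (v - w)) with hw'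
    have hE' : jap v' ^ 2 + jap w' ^ 2 ≤ jap v ^ 2 + jap w ^ 2 := by
      rw [jap_sq, jap_sq, jap_sq, jap_sq]; linarith
    have c1 : s * psi f g v' ≤ |s| * jap v' ^ 2 := by
      calc s * psi f g v' ≤ |s * psi f g v'| := le_abs_self _
        _ = |s| * |psi f g v'| := abs_mul _ _
        _ ≤ |s| * jap v' ^ 2 := mul_le_mul_of_nonneg_left (psi_abs_le f g v') (abs_nonneg s)
    have c2 : s * psi f g w' ≤ |s| * jap w' ^ 2 := by
      calc s * psi f g w' ≤ |s * psi f g w'| := le_abs_self _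
        _ = |s| * |psi f g w'| := abs_mul _ _
        _ ≤ |s| * jap w' ^ 2 := mul_le_mul_of_nonneg_left (psi_abs_le f g w') (abs_nonneg s)
    have c3 : s * psi f g w = |s| * jap w ^ 2 := by
      rw [psi, ← hs, ← mul_assoc, real_self_mul_sign]
    have c4 : -(s * psi f g v) ≤ |s| * jap v ^ 2 := by
      calc -(s * psi f g v) ≤ |s * psi f g v| := neg_le_abs _
        _ = |s| * |psi f g v| := abs_mul _ _
        _ ≤ |s| * jap v ^ 2 := mul_le_mul_of_nonneg_left (psi_abs_le f g v) (abs_nonneg s)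
    have c5 : |s| * (jap v' ^ 2 + jap w' ^ 2) ≤ |s| * (jap v ^ 2 + jap w ^ 2) :=
      mul_le_mul_of_nonneg_left hE' (abs_nonneg s)
    have expand : s * φ σ = s * psi f g v' + s * psi f g w' - s * psi f g v - s * psi f g w := by
      rw [hφ]; ring
    rw [expand, c3]
    nlinarith [c1, c2, c4, c5]
  have step : s * ∫ σ, φ σ ∂S2 ≤ 4 * π * (|s| * (2 * jap v ^ 2)) := by
    rw [← MeasureTheory.integral_const_mul]
    calc ∫ σ, s * φ σ ∂S2 ≤ ∫ _σ, |s| * (2 * jap v ^ 2) ∂S2 :=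
          integral_mono (hI.const_mul s) (integrable_const _) hpt
      _ = (S2 Set.univ).toReal * (|s| * (2 * jap v ^ 2)) := by
          rw [integral_const]; simp [smul_eq_mul, Measure.real]
      _ = 4 * π * (|s| * (2 * jap v ^ 2)) := by rw [S2_univ]
  have hπ : (0:ℝ) < 4 * π := by positivity
  calc s * Aop ζ (psi f g) v w = (4*π)⁻¹ * (s * ∫ σ, φ σ ∂S2) := by rw [Aop]; ring
    _ ≤ (4*π)⁻¹ * (4 * π * (|s| * (2 * jap v ^ 2))) :=
        mul_le_mul_of_nonneg_left step (by positivity)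
    _ = |s| * (2 * jap v ^ 2) := by field_simp
end key3

lemma chain_lemma (q a b jv jw : ℝ) (hq0 : 0 ≤ q) (hq : q ≤ jv * jw)
    (ha : 0 ≤ a) (hb : 0 ≤ b) (hjv : 1 ≤ jv) (hjw : 0 ≤ jw) :
    q * (a * (b * (2 * jw^2))) ≤ 2 * ((b * jv^2) * (a * jw^3)) := by
  have hc : 0 ≤ 2*a*b*jw^2 := by
    have := mul_nonneg (mul_nonneg (mul_nonneg (by norm_num : (0:ℝ) ≤ 2) ha) hb) (sq_nonneg jw)
    simpa [pow_two] using this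
  have h2 : (2*a*b*jw^2) * q ≤ (2*a*b*jw^2) * (jv*jw) := mul_le_mul_of_nonneg_left hq hc
  have h3 : jv ≤ jv^2 := by nlinarith
  have hc2 : 0 ≤ 2*a*b*jw^3 := by positivity
  have h4 : (2*a*b*jw^3) * jv ≤ (2*a*b*jw^3) * jv^2 := mul_le_mul_of_nonneg_left h3 hc2
  calc q * (a * (b * (2 * jw^2))) = (2*a*b*jw^2) * q := by ring
    _ ≤ (2*a*b*jw^2) * (jv*jw) := h2
    _ = (2*a*b*jw^3) * jv := by ring
    _ ≤ (2*a*b*jw^3) * jv^2 := h4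
    _ = 2 * ((b * jv^2) * (a * jw^3)) := by ring

theorem quadratic_stability_estimate (ε : ℝ) (hε : ε ∈ Set.Ioc (0:ℝ) 1)
    (f g : V → ℝ) (hfmeas : Measurable f) (hgmeas : Measurable g)
    (hfpos : ∀ v, 0 ≤ f v) (hgpos : ∀ v, 0 ≤ g v)
    (hf3 : MemL1w f 3) (hg3 : MemL1w g 3) :
    (1/2) * (∫ v : V, ∫ w : V, (f v * f w - g v * g w) * ‖v - w‖ *
        Aop ((1+ε)/2) (fun u => Real.sign (f u - g u) * (jap u)^2) v w)
      ≤ L1norm (fun v => f v + g v) 3 * L1norm (fun v => f v - g v) 2 := by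
  obtain ⟨hε0, hε1⟩ := hε
  set ζ : ℝ := (1+ε)/2 with hζ
  have h0 : 0 ≤ ζ := by rw [hζ]; linarith
  have h1 : ζ ≤ 1 := by rw [hζ]; linarith
  have hψ : (fun u => Real.sign (f u - g u) * (jap u)^2) = psi f g := rfl
  rw [hψ]
  set G : V → V → ℝ := fun v w => (f v * f w - g v * g w) * ‖v - w‖ * Aop ζ (psi f g) v w
    with hG
  set B : V → V → ℝ := fun v w =>
    (|f v - g v| * jap v ^ 2) * ((f w + g w) * jap w ^ 3)
      + ((f v + g v) * jap v ^ 3) * (|f w - g w| * jap w ^ 2) with hB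
  have Bnonneg : ∀ v w, 0 ≤ B v w := by
    intro v w
    have := hfpos v; have := hfpos w; have := hgpos v; have := hgpos w
    have := jap_nonneg v; have := jap_nonneg w
    have := abs_nonneg (f v - g v); have := abs_nonneg (f w - g w)
    apply add_nonneg <;> apply mul_nonneg <;> apply mul_nonneg <;> positivity
  -- pointwise bound
  have key : ∀ v w, G v w ≤ B v w := by
    intro v w
    have A1 := sAop_left f g hfmeas hgmeas ζ h0 h1 v w
    have A2 := sAop_right f g hfmeas hgmeas ζ h0 h1 v w
    have Fw0 : 0 ≤ f w + g w := add_nonneg (hfpos w) (hgpos w)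
    have Fv0 : 0 ≤ f v + g v := add_nonneg (hfpos v) (hgpos v)
    have q0 : 0 ≤ ‖v - w‖ := norm_nonneg _
    have T1 : ‖v - w‖ * ((f w + g w) * ((f v - g v) * Aop ζ (psi f g) v w))
        ≤ ‖v - w‖ * ((f w + g w) * (|f v - g v| * (2 * jap w ^ 2))) :=
      mul_le_mul_of_nonneg_left (mul_le_mul_of_nonneg_left A1 Fw0) q0
    have T2 : ‖v - w‖ * ((f v + g v) * ((f w - g w) * Aop ζ (psi f g) v w))
        ≤ ‖v - w‖ * ((f v + g v) * (|f w - g w| * (2 * jap v ^ 2))) :=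
      mul_le_mul_of_nonneg_left (mul_le_mul_of_nonneg_left A2 Fv0) q0
    have C1 : ‖v - w‖ * ((f w + g w) * (|f v - g v| * (2 * jap w ^ 2)))
        ≤ 2 * ((|f v - g v| * jap v ^ 2) * ((f w + g w) * jap w ^ 3)) :=
      chain_lemma _ _ _ _ _ q0 (norm_sub_le_jap v w) Fw0 (abs_nonneg _)
        (jap_one_le v) (jap_nonneg w)
    have C2 : ‖v - w‖ * ((f v + g v) * (|f w - g w| * (2 * jap v ^ 2)))
        ≤ 2 * ((|f w - g w| * jap w ^ 2) * ((f v + g v) * jap v ^ 3)) :=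
      chain_lemma _ _ _ _ _ q0 (by rw [mul_comm]; exact norm_sub_le_jap v w) Fv0
        (abs_nonneg _) (jap_one_le w) (jap_nonneg v)
    have hGexp : G v w = (1/2) * (‖v - w‖ * ((f w + g w) * ((f v - g v) * Aop ζ (psi f g) v w)))
        + (1/2) * (‖v - w‖ * ((f v + g v) * ((f w - g w) * Aop ζ (psi f g) v w))) := by
      rw [hG]; ring
    rw [hGexp, hB]
    nlinarith [T1, T2, C1, C2]
  -- integrability of the dominating function
  have rpow3 : ∀ x : ℝ, 0 ≤ x → x ^ (3:ℝ) = x ^ (3:ℕ) := by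
    intro x hx; rw [show (3:ℝ) = ((3:ℕ):ℝ) by norm_num, Real.rpow_natCast]
  have rpow2 : ∀ x : ℝ, 0 ≤ x → x ^ (2:ℝ) = x ^ (2:ℕ) := by
    intro x hx; rw [show (2:ℝ) = ((2:ℕ):ℝ) by norm_num, Real.rpow_natCast]
  have Φ3 : Integrable (fun w : V => (f w + g w) * jap w ^ 3) := by
    have hf' : Integrable (fun v : V => f v * jap v ^ (3:ℕ)) :=
      hf3.congr (Eventually.of_forall fun v => by
        simp only [abs_of_nonneg (hfpos v), rpow3 _ (jap_nonneg v)])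
    have hg' : Integrable (fun v : V => g v * jap v ^ (3:ℕ)) :=
      hg3.congr (Eventually.of_forall fun v => by
        simp only [abs_of_nonneg (hgpos v), rpow3 _ (jap_nonneg v)])
    exact (hf'.add hg').congr (Eventually.of_forall fun v => by simp [Pi.add_apply]; ring)
  have H2meas : Measurable (fun v : V => |f v - g v| * jap v ^ 2) :=
    ((hfmeas.sub hgmeas).abs).mul (continuous_jap.pow 2).measurable
  have H2 : Integrable (fun v : V => |f v - g v| * jap v ^ 2) := by
    refine Φ3.mono' H2meas.aestronglyMeasurable (Eventually.of_forall fun v => ?_)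
    have h1' : |f v - g v| ≤ f v + g v := by
      have := abs_sub (f v) (g v)  -- |f - g| ≤ |f| + |g|
      rw [abs_of_nonneg (hfpos v), abs_of_nonneg (hgpos v)] at this
      linarith
    have h2' : jap v ^ 2 ≤ jap v ^ 3 :=
      pow_le_pow_right₀ (jap_one_le v) (by norm_num)
    rw [Real.norm_eq_abs, abs_of_nonneg (mul_nonneg (abs_nonneg _) (by positivity))]
    exact mul_le_mul h1' h2' (by positivity) (add_nonneg (hfpos v) (hgpos v))
  set K1 : ℝ := ∫ w : V, (f w + g w) * jap w ^ 3 with hK1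
  set K2 : ℝ := ∫ w : V, |f w - g w| * jap w ^ 2 with hK2
  have Bint : ∀ v, Integrable (fun w => B v w) := by
    intro v
    exact (Φ3.const_mul _).add (H2.const_mul _)
  have Bval : ∀ v, (∫ w : V, B v w) =
      (|f v - g v| * jap v ^ 2) * K1 + ((f v + g v) * jap v ^ 3) * K2 := by
    intro v
    rw [hB]
    rw [integral_add (Φ3.const_mul _) (H2.const_mul _), MeasureTheory.integral_const_mul,
      MeasureTheory.integral_const_mul]
  have Jint : Integrable (fun v => ∫ w : V, B v w) := by
    rw [funext Bval]
    exact (H2.mul_const K1).add (Φ3.mul_const K2)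
  have inner : ∀ v, (∫ w : V, G v w) ≤ ∫ w : V, B v w := by
    intro v
    by_cases hi : Integrable (fun w => G v w)
    · exact integral_mono hi (Bint v) (key v)
    · rw [integral_undef hi]
      exact integral_nonneg fun w => Bnonneg v w
  have outer : (∫ v : V, ∫ w : V, G v w) ≤ ∫ v : V, ∫ w : V, B v w := by
    by_cases ho : Integrable (fun v => ∫ w : V, G v w)
    · exact integral_mono ho Jint inner
    · rw [integral_undef ho]
      exact integral_nonneg fun v => integral_nonneg fun w => Bnonneg v w
  have total : (∫ v : V, ∫ w : V, B v w) = K2 * K1 + K1 * K2 := by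
    rw [funext Bval, integral_add (H2.mul_const K1) (Φ3.mul_const K2),
      MeasureTheory.integral_mul_const, MeasureTheory.integral_mul_const, ← hK1, ← hK2]
  have hL1 : L1norm (fun v => f v + g v) 3 = K1 := by
    rw [L1norm, hK1]
    congr 1; funext v
    rw [abs_of_nonneg (add_nonneg (hfpos v) (hgpos v)), rpow3 _ (jap_nonneg v)]
  have hL2 : L1norm (fun v => f v - g v) 2 = K2 := by
    rw [L1norm, hK2]
    congr 1; funext v
    rw [rpow2 _ (jap_nonneg v)]
  rw [hL1, hL2]
  calc (1/2) * (∫ v : V, ∫ w : V, G v w) ≤ (1/2) * (∫ v : V, ∫ w : V, B v w) := by linarith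
    _ = K1 * K2 := by rw [total]; ring
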